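/- Let g, g' > 0 with g < g', and suppose λ, λ' > 0 satisfy the complementary slackness equations I/τ(λ) = a(g, λ)·W·log₂(1 + c(g)/a(g, λ)) and I/τ(λ') = a(g', λ')·W·log₂(1 + c(g')/a(g', λ')), where τ(λ) = √(λ·I/s) with s > 0, c(g) = p·g/(W·N₀), and a(g, λ) is given by the Lambert-W closed form of Proposition 2 with common μ > 0. If a(g,λ) and τ(λ) are strictly increasing in λ and a is strictly increasing in g, and the left side I/τ strictly decreases in λ, then λ ≥ λ', i.e., λ is non-increasing in g. -/

import Mathlib

/-- Auxiliary: for `c > 0`, the map `x ↦ x * log (1 + c/x)` is strictly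
increasing on `(0, ∞)`. -/
lemma aux_xlog_strictMono (c : ℝ) (hc : 0 < c) :
    StrictMonoOn (fun x : ℝ => x * Real.log (1 + c / x)) (Set.Ioi 0) := by
  have hderiv : ∀ x ∈ Set.Ioi (0:ℝ),
      HasDerivAt (fun x : ℝ => x * Real.log (1 + c / x))
        (Real.log (1 + c / x) - c / (x + c)) x := by
    intro x hx
    have hx0 : (0:ℝ) < x := hx
    have h1 : (0:ℝ) < 1 + c / x := by positivity
    have hinv : HasDerivAt (fun y : ℝ => y⁻¹) (-(x ^ 2)⁻¹) x :=
      hasDerivAt_inv (ne_of_gt hx0)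
    have hd1 : HasDerivAt (fun x : ℝ => 1 + c / x) (-c / x ^ 2) x := by
      have h := (hinv.const_mul c).const_add 1
      have : c * -(x ^ 2)⁻¹ = -c / x ^ 2 := by field_simp
      simpa [div_eq_mul_inv, this] using h
    have hd2 : HasDerivAt (fun x : ℝ => Real.log (1 + c / x))
        ((-c / x ^ 2) / (1 + c / x)) x := hd1.log (ne_of_gt h1)
    have : HasDerivAt (fun x : ℝ => x * Real.log (1 + c / x))
        (1 * Real.log (1 + c / x) + x * ((-c / x ^ 2) / (1 + c / x))) x :=
      (hasDerivAt_id' x).fun_mul hd2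
    convert this using 1
    have hxc : x + c ≠ 0 := by positivity
    field_simp
    ring
  have hcont : ContinuousOn (fun x : ℝ => x * Real.log (1 + c / x)) (Set.Ioi 0) :=
    fun x hx => ((hderiv x hx).continuousAt).continuousWithinAt
  apply strictMonoOn_of_deriv_pos (convex_Ioi 0) hcont
  intro x hx
  rw [interior_Ioi] at hx
  rw [(hderiv x hx).deriv]
  have hx0 : (0:ℝ) < x := hx
  have hxc : (0:ℝ) < x + c := by positivity
  have hu0 : (0:ℝ) < x / (x + c) := by positivity
  have hu1 : x / (x + c) ≠ 1 := by
    intro h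
    have := (div_eq_one_iff_eq (ne_of_gt hxc)).mp h
    linarith
  have hlog : Real.log (x / (x + c)) < x / (x + c) - 1 :=
    Real.log_lt_sub_one_of_pos hu0 hu1
  have h1 : 1 + c / x = (x + c) / x := by field_simp
  have h2 : Real.log (x / (x + c)) = - Real.log ((x + c) / x) := by
    rw [← Real.log_inv]; congr 1; field_simp
  have h3 : x / (x + c) - 1 = - (c / (x + c)) := by field_simp; ring
  rw [h1]
  rw [h2, h3] at hlog
  linarith

theorem stmt_15 (I s p W N₀ : ℝ) (hI : 0 < I) (hs : 0 < s) (hp : 0 < p)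
    (hW : 0 < W) (hN₀ : 0 < N₀)
    (a : ℝ → ℝ → ℝ)
    (τ : ℝ → ℝ) (hτ : ∀ lam, τ lam = Real.sqrt (lam * I / s))
    (c : ℝ → ℝ) (hcdef : ∀ g, c g = p * g / (W * N₀))
    (ha_pos : ∀ g lam, 0 < g → 0 < lam → 0 < a g lam)
    (ha_lam : ∀ g, 0 < g → StrictMonoOn (a g) (Set.Ioi 0))
    (ha_g : ∀ lam, 0 < lam → StrictMonoOn (fun g => a g lam) (Set.Ioi 0))
    (hLHS : StrictAntiOn (fun lam => I / τ lam) (Set.Ioi 0))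
    (g g' lam lam' : ℝ) (hg : 0 < g) (hgg' : g < g')
    (hlam : 0 < lam) (hlam' : 0 < lam')
    (heq : I / τ lam = a g lam * W * Real.logb 2 (1 + c g / a g lam))
    (heq' : I / τ lam' = a g' lam' * W * Real.logb 2 (1 + c g' / a g' lam')) :
    lam' ≤ lam := by
  by_contra h
  push_neg at h
  have hg' : 0 < g' := lt_trans hg hgg'
  -- LHS comparison
  have hL : I / τ lam' < I / τ lam := hLHS hlam hlam' h
  -- a comparisons
  have ha1 : a g lam < a g lam' := ha_lam g hg hlam hlam' h
  have ha2 : a g lam' < a g' lam' := ha_g lam' hlam' hg hg' hgg'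
  have ha3 : a g lam < a g' lam' := lt_trans ha1 ha2
  have hcg : 0 < c g := by rw [hcdef]; positivity
  have hcg' : c g < c g' := by
    rw [hcdef, hcdef]; gcongr
  have hA0 : 0 < a g lam := ha_pos g lam hg hlam
  have hA0' : 0 < a g' lam' := ha_pos g' lam' hg' hlam'
  have step1 : a g lam * Real.log (1 + c g / a g lam)
      < a g' lam' * Real.log (1 + c g / a g' lam') :=
    aux_xlog_strictMono (c g) hcg hA0 hA0' ha3
  have step2 : a g' lam' * Real.log (1 + c g / a g' lam')
      ≤ a g' lam' * Real.log (1 + c g' / a g' lam') := by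
    apply mul_le_mul_of_nonneg_left _ hA0'.le
    apply Real.log_le_log (by positivity)
    gcongr
  have hlog2 : 0 < Real.log 2 := Real.log_pos (by norm_num)
  have key : a g lam * W * Real.logb 2 (1 + c g / a g lam)
      < a g' lam' * W * Real.logb 2 (1 + c g' / a g' lam') := by
    rw [Real.logb, Real.logb]
    have h := mul_lt_mul_of_pos_left (lt_of_lt_of_le step1 step2)
      (div_pos hW hlog2)
    calc a g lam * W * (Real.log (1 + c g / a g lam) / Real.log 2)
        = W / Real.log 2 * (a g lam * Real.log (1 + c g / a g lam)) := by ring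
      _ < W / Real.log 2 * (a g' lam' * Real.log (1 + c g' / a g' lam')) := h
      _ = a g' lam' * W * (Real.log (1 + c g' / a g' lam') / Real.log 2) := by ring
  rw [heq, heq'] at hL
  linarith
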